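/- Let K be a nondegenerate triangle in ℝ² with vertices W₁, W₂, W₃ and area |K|, and let φ_i(x) = (x − W_i)/(2|K|). Then every vector field p on K of the form p(x) = c + λx (with constant vector c ∈ ℝ² and scalar λ ∈ ℝ) can be written uniquely as p = Σᵢ πᵢ φ_i with πᵢ = ∫_{a_i} p · n_i ds, where a_i is the edge opposite W_i and n_i its outward unit normal. -/

import Mathlib

lemma rt_norm_sq (x : EuclideanSpace ℝ (Fin 2)) : ‖x‖^2 = (x 0)^2 + (x 1)^2 := by
  rw [EuclideanSpace.norm_eq, Real.sq_sqrt (by positivity)]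
  simp [Fin.sum_univ_two]

lemma rt_flux (u v m c : EuclideanSpace ℝ (Fin 2)) (lam : ℝ)
    (hperp : (inner ℝ m (u - v) : ℝ) = 0) :
    (∫ s in (0:ℝ)..1, ‖u - v‖ * (inner ℝ (c + lam • (s • u + (1-s) • v)) m : ℝ))
      = ‖u - v‖ * (inner ℝ (c + lam • u) m) := by
  have hc : ∀ s : ℝ, ‖u - v‖ * (inner ℝ (c + lam • (s • u + (1-s) • v)) m : ℝ)
      = ‖u - v‖ * (inner ℝ (c + lam • u) m) := by
    intro s
    simp only [PiLp.inner_apply, RCLike.inner_apply, PiLp.add_apply, PiLp.smul_apply,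
      PiLp.sub_apply, smul_eq_mul, Fin.sum_univ_two, conj_trivial] at hperp ⊢
    linear_combination (-(‖u - v‖ * lam * (1 - s))) * hperp
  rw [intervalIntegral.integral_congr (g := fun _ => ‖u - v‖ * (inner ℝ (c + lam • u) m : ℝ))
    (fun s _ => hc s)]
  simp

lemma rt_normal_coords (e0 e1 m0 m1 u0 u1 D L : ℝ)
    (hperp : m0 * e0 + m1 * e1 = 0)
    (hunit : m0^2 + m1^2 = 1)
    (hout : m0 * u0 + m1 * u1 < 0)
    (hD : e1 * u0 - e0 * u1 = D)
    (hDne : D ≠ 0)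
    (hL : L^2 = e0^2 + e1^2) (hL0 : 0 ≤ L) :
    (0 < D → L * m0 = -e1 ∧ L * m1 = e0) ∧ (D < 0 → L * m0 = e1 ∧ L * m1 = -e0) := by
  have hE : 0 < e0^2 + e1^2 := by
    rcases lt_or_eq_of_le (by positivity : (0:ℝ) ≤ e0^2 + e1^2) with h | h
    · exact h
    · exfalso
      have he0 : e0 = 0 := by nlinarith
      have he1 : e1 = 0 := by nlinarith
      exact hDne (by rw [← hD, he0, he1]; ring)
  set κ := m0 * e1 - m1 * e0 with hκ
  have hκ2 : κ^2 = e0^2 + e1^2 := by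
    linear_combination (e0^2 + e1^2) * hunit - (m0*e0 + m1*e1) * hperp
  have hκD : κ * D = (e0^2 + e1^2) * (m0*u0 + m1*u1) := by
    linear_combination (-κ) * hD - (e0*u0 + e1*u1) * hperp
  have hκDneg : κ * D < 0 := by
    rw [hκD]; exact mul_neg_of_pos_of_neg hE hout
  have hm0E : (e0^2+e1^2) * m0 = κ * e1 := by linear_combination e0 * hperp
  have hm1E : (e0^2+e1^2) * m1 = -(κ * e0) := by linear_combination e1 * hperp
  constructor
  · intro hDpos
    have hκneg : κ < 0 := by nlinarith
    have hκL : κ = -L := by nlinarith [sq_nonneg (κ + L)]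
    constructor
    · apply mul_left_cancel₀ hE.ne'
      linear_combination L * hm0E - e1 * hκ2 + (e1*κ) * hκL
    · apply mul_left_cancel₀ hE.ne'
      linear_combination L * hm1E + e0 * hκ2 - (e0*κ) * hκL
  · intro hDneg
    have hκpos : 0 < κ := by nlinarith
    have hκL : κ = L := by nlinarith [sq_nonneg (κ - L)]
    constructor
    · apply mul_left_cancel₀ hE.ne'
      linear_combination L * hm0E + e1 * hκ2 - (e1*κ) * hκL
    · apply mul_left_cancel₀ hE.ne'
      linear_combination L * hm1E - e0 * hκ2 + (e0*κ) * hκL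

theorem stmt19 (W : Fin 3 → EuclideanSpace ℝ (Fin 2))
    (hnd : (W 1 - W 0) 0 * (W 2 - W 0) 1 - (W 1 - W 0) 1 * (W 2 - W 0) 0 ≠ 0)
    (area : ℝ)
    (harea : area = |(W 1 - W 0) 0 * (W 2 - W 0) 1 - (W 1 - W 0) 1 * (W 2 - W 0) 0| / 2)
    (n : Fin 3 → EuclideanSpace ℝ (Fin 2))
    (hunit : ∀ i, ‖n i‖ = 1)
    (hperp : ∀ i, (inner ℝ (n i) (W (i + 1) - W (i + 2)) : ℝ) = 0)
    (hout : ∀ i, (inner ℝ (n i) (W i - W (i + 1)) : ℝ) < 0)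
    (c : EuclideanSpace ℝ (Fin 2)) (lam : ℝ)
    (p : EuclideanSpace ℝ (Fin 2) → EuclideanSpace ℝ (Fin 2))
    (hp : ∀ x, p x = c + lam • x)
    (π : Fin 3 → ℝ)
    (hπ : ∀ i, π i = ∫ s in (0:ℝ)..1, ‖W (i + 1) - W (i + 2)‖ *
        (inner ℝ (p (s • W (i + 1) + (1 - s) • W (i + 2))) (n i) : ℝ)) :
    (∀ x, p x = ∑ i, π i • ((2 * area)⁻¹ • (x - W i))) ∧
      ∀ π' : Fin 3 → ℝ,
        (∀ x, p x = ∑ i, π' i • ((2 * area)⁻¹ • (x - W i))) → π' = π := by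
  simp only [PiLp.sub_apply] at hnd harea
  have i01 : ((0:Fin 3)+1) = 1 := rfl
  have i02 : ((0:Fin 3)+2) = 2 := rfl
  have i11 : ((1:Fin 3)+1) = 2 := rfl
  have i12 : ((1:Fin 3)+2) = 0 := rfl
  have i21 : ((2:Fin 3)+1) = 0 := rfl
  have i22 : ((2:Fin 3)+2) = 1 := rfl
  -- flux values
  have hflux : ∀ i, π i = ‖W (i+1) - W (i+2)‖ * (inner ℝ (c + lam • W (i+1)) (n i) : ℝ) := by
    intro i
    rw [hπ i]
    simp only [hp]
    exact rt_flux (W (i+1)) (W (i+2)) (n i) c lam (hperp i)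
  have hπval : ∀ i, π i = (c 0 + lam * W (i+1) 0) * (‖W (i+1) - W (i+2)‖ * n i 0)
      + (c 1 + lam * W (i+1) 1) * (‖W (i+1) - W (i+2)‖ * n i 1) := by
    intro i
    rw [hflux i]
    simp only [PiLp.inner_apply, RCLike.inner_apply, PiLp.add_apply, PiLp.smul_apply,
      smul_eq_mul, Fin.sum_univ_two, conj_trivial]
    ring
  have hunit' : ∀ i, (n i 0)^2 + (n i 1)^2 = 1 := by
    intro i
    have h := rt_norm_sq (n i)
    rw [hunit i] at h
    linarith
  have hperp' : ∀ i, n i 0 * (W (i+1) 0 - W (i+2) 0) + n i 1 * (W (i+1) 1 - W (i+2) 1) = 0 := by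
    intro i
    have h := hperp i
    simp only [PiLp.inner_apply, RCLike.inner_apply, PiLp.sub_apply, Fin.sum_univ_two,
      conj_trivial] at h
    linear_combination h
  have hout' : ∀ i, n i 0 * (W i 0 - W (i+1) 0) + n i 1 * (W i 1 - W (i+1) 1) < 0 := by
    intro i
    have h := hout i
    simp only [PiLp.inner_apply, RCLike.inner_apply, PiLp.sub_apply, Fin.sum_univ_two,
      conj_trivial] at h
    linarith
  have hD0 : (W (0+1) 1 - W (0+2) 1) * (W 0 0 - W (0+1) 0)
      - (W (0+1) 0 - W (0+2) 0) * (W 0 1 - W (0+1) 1)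
      = (W 1 0 - W 0 0) * (W 2 1 - W 0 1) - (W 1 1 - W 0 1) * (W 2 0 - W 0 0) := by
    rw [i01, i02]; ring
  have hD1 : (W (1+1) 1 - W (1+2) 1) * (W 1 0 - W (1+1) 0)
      - (W (1+1) 0 - W (1+2) 0) * (W 1 1 - W (1+1) 1)
      = (W 1 0 - W 0 0) * (W 2 1 - W 0 1) - (W 1 1 - W 0 1) * (W 2 0 - W 0 0) := by
    rw [i11, i12]; ring
  have hD2 : (W (2+1) 1 - W (2+2) 1) * (W 2 0 - W (2+1) 0)
      - (W (2+1) 0 - W (2+2) 0) * (W 2 1 - W (2+1) 1)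
      = (W 1 0 - W 0 0) * (W 2 1 - W 0 1) - (W 1 1 - W 0 1) * (W 2 0 - W 0 0) := by
    rw [i21, i22]; ring
  have hL : ∀ i, ‖W (i+1) - W (i+2)‖^2
      = (W (i+1) 0 - W (i+2) 0)^2 + (W (i+1) 1 - W (i+2) 1)^2 := by
    intro i
    rw [rt_norm_sq]
    simp [PiLp.sub_apply]
  have hNC0 := rt_normal_coords (W (0+1) 0 - W (0+2) 0) (W (0+1) 1 - W (0+2) 1)
    (n 0 0) (n 0 1) (W 0 0 - W (0+1) 0) (W 0 1 - W (0+1) 1)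
    ((W 1 0 - W 0 0) * (W 2 1 - W 0 1) - (W 1 1 - W 0 1) * (W 2 0 - W 0 0))
    ‖W (0+1) - W (0+2)‖ (hperp' 0) (hunit' 0) (hout' 0) hD0 hnd (hL 0) (norm_nonneg _)
  have hNC1 := rt_normal_coords (W (1+1) 0 - W (1+2) 0) (W (1+1) 1 - W (1+2) 1)
    (n 1 0) (n 1 1) (W 1 0 - W (1+1) 0) (W 1 1 - W (1+1) 1)
    ((W 1 0 - W 0 0) * (W 2 1 - W 0 1) - (W 1 1 - W 0 1) * (W 2 0 - W 0 0))
    ‖W (1+1) - W (1+2)‖ (hperp' 1) (hunit' 1) (hout' 1) hD1 hnd (hL 1) (norm_nonneg _)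
  have hNC2 := rt_normal_coords (W (2+1) 0 - W (2+2) 0) (W (2+1) 1 - W (2+2) 1)
    (n 2 0) (n 2 1) (W 2 0 - W (2+1) 0) (W 2 1 - W (2+1) 1)
    ((W 1 0 - W 0 0) * (W 2 1 - W 0 1) - (W 1 1 - W 0 1) * (W 2 0 - W 0 0))
    ‖W (2+1) - W (2+2)‖ (hperp' 2) (hunit' 2) (hout' 2) hD2 hnd (hL 2) (norm_nonneg _)
  have h1 : ∀ x, p x = ∑ i, π i • ((2 * area)⁻¹ • (x - W i)) := by
    rcases lt_or_gt_of_ne hnd with hneg | hpos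
    · -- D < 0 : L*m0 = e1, L*m1 = -e0, 2*area = -D
      have hπ0 : π 0 = (c 0 + lam * W 1 0) * (W 1 1 - W 2 1)
          - (c 1 + lam * W 1 1) * (W 1 0 - W 2 0) := by
        have h := hπval 0
        rw [(hNC0.2 hneg).1, (hNC0.2 hneg).2, i01, i02] at h
        linear_combination h
      have hπ1 : π 1 = (c 0 + lam * W 2 0) * (W 2 1 - W 0 1)
          - (c 1 + lam * W 2 1) * (W 2 0 - W 0 0) := by
        have h := hπval 1
        rw [(hNC1.2 hneg).1, (hNC1.2 hneg).2, i11, i12] at h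
        linear_combination h
      have hπ2 : π 2 = (c 0 + lam * W 0 0) * (W 0 1 - W 1 1)
          - (c 1 + lam * W 0 1) * (W 0 0 - W 1 0) := by
        have h := hπval 2
        rw [(hNC2.2 hneg).1, (hNC2.2 hneg).2, i21, i22] at h
        linear_combination h
      have hne : -((W 1 0 - W 0 0) * (W 2 1 - W 0 1)
          - (W 1 1 - W 0 1) * (W 2 0 - W 0 0)) ≠ 0 := by
        intro h; apply hnd; linarith
      have h2a : 2 * area = -((W 1 0 - W 0 0) * (W 2 1 - W 0 1)
          - (W 1 1 - W 0 1) * (W 2 0 - W 0 0)) := by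
        rw [harea, abs_of_neg hneg]; ring
      intro x
      rw [hp]
      ext j
      fin_cases j <;>
        · simp only [Fin.mk_zero, Fin.mk_one, Fin.sum_univ_three, PiLp.add_apply,
            PiLp.smul_apply, PiLp.sub_apply, smul_eq_mul, Fin.isValue]
          rw [hπ0, hπ1, hπ2, h2a]
          simp only [inv_neg]
          field_simp [hnd]
          ring
    · -- D > 0 : L*m0 = -e1, L*m1 = e0, 2*area = D
      have hπ0 : π 0 = -((c 0 + lam * W 1 0) * (W 1 1 - W 2 1))
          + (c 1 + lam * W 1 1) * (W 1 0 - W 2 0) := by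
        have h := hπval 0
        rw [(hNC0.1 hpos).1, (hNC0.1 hpos).2, i01, i02] at h
        linear_combination h
      have hπ1 : π 1 = -((c 0 + lam * W 2 0) * (W 2 1 - W 0 1))
          + (c 1 + lam * W 2 1) * (W 2 0 - W 0 0) := by
        have h := hπval 1
        rw [(hNC1.1 hpos).1, (hNC1.1 hpos).2, i11, i12] at h
        linear_combination h
      have hπ2 : π 2 = -((c 0 + lam * W 0 0) * (W 0 1 - W 1 1))
          + (c 1 + lam * W 0 1) * (W 0 0 - W 1 0) := by
        have h := hπval 2
        rw [(hNC2.1 hpos).1, (hNC2.1 hpos).2, i21, i22] at h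
        linear_combination h
      have h2a : 2 * area = (W 1 0 - W 0 0) * (W 2 1 - W 0 1)
          - (W 1 1 - W 0 1) * (W 2 0 - W 0 0) := by
        rw [harea, abs_of_pos hpos]; ring
      intro x
      rw [hp]
      ext j
      fin_cases j <;>
        · simp only [Fin.mk_zero, Fin.mk_one, Fin.sum_univ_three, PiLp.add_apply,
            PiLp.smul_apply, PiLp.sub_apply, smul_eq_mul, Fin.isValue]
          rw [hπ0, hπ1, hπ2, h2a]
          field_simp [hnd]
          ring
  refine ⟨h1, ?_⟩
  intro π' h'
  have hA : 0 < area := by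
    rw [harea]
    have := abs_pos.mpr hnd
    linarith
  have key2 : ∀ (x : EuclideanSpace ℝ (Fin 2)) (j : Fin 2),
      π' 0 * (x j - W 0 j) + π' 1 * (x j - W 1 j) + π' 2 * (x j - W 2 j)
        = π 0 * (x j - W 0 j) + π 1 * (x j - W 1 j) + π 2 * (x j - W 2 j) := by
    intro x j
    have h := congrArg (fun v => v j) ((h' x).symm.trans (h1 x))
    simp only [Fin.sum_univ_three, PiLp.add_apply, PiLp.smul_apply, PiLp.sub_apply,
      smul_eq_mul] at h
    field_simp [hA.ne'] at h
    linear_combination h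
  have E00 := key2 (W 0) 0
  have E01 := key2 (W 0) 1
  have E10 := key2 (W 1) 0
  have E11 := key2 (W 1) 1
  funext i
  fin_cases i
  · show π' 0 = π 0
    apply mul_left_cancel₀ hnd
    linear_combination (-(W 1 1 - W 2 1)) * E10 + (W 1 0 - W 2 0) * E11
  · show π' 1 = π 1
    apply mul_left_cancel₀ hnd
    linear_combination (W 0 1 - W 2 1) * E00 - (W 0 0 - W 2 0) * E01
  · show π' 2 = π 2
    apply mul_left_cancel₀ hnd
    linear_combination (-(W 0 1 - W 1 1)) * E00 + (W 0 0 - W 1 0) * E01
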